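/- Let Ω be a bounded open set in ℝⁿ, and suppose for each p in an open interval I ⊆ ]1,∞[ we are given u_p ∈ W^{1,p}_0(Ω) with 0 ≤ u_p(x) ≤ c d(x)^{α} and |∇u_p(x)| ≤ c d(x)^{α−1} a.e., where c > 0 and α ∈ ]0,1[ are independent of p, and ∫_Ω |u_p|^p/d^p dx = 1. If moreover ∫_Ω d^{-β} dx < ∞ for all β < 1, then for any p₀ ∈ I with p₀(1−α) < 1 and any sequence p_n → p₀ with u_{p_n} → ũ a.e. in Ω, one has ∫_Ω |ũ|^{p₀}/d^{p₀} dx = 1. -/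

import Mathlib

open MeasureTheory Set Filter Topology

theorem stmt18 {n : ℕ} (Ω : Set (EuclideanSpace ℝ (Fin n))) (hΩ : IsOpen Ω)
    (hb : Bornology.IsBounded Ω)
    (d : EuclideanSpace ℝ (Fin n) → ℝ) (hd : ∀ x, d x = Metric.infDist x (frontier Ω))
    (I : Set ℝ) (hI : IsOpen I) (hI1 : I ⊆ Set.Ioi 1)
    (c α : ℝ) (hc : 0 < c) (hα : α ∈ Set.Ioo (0 : ℝ) 1)
    (u : ℝ → EuclideanSpace ℝ (Fin n) → ℝ)
    (hbound : ∀ p ∈ I, ∀ᵐ x ∂(volume.restrict Ω),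
      0 ≤ u p x ∧ u p x ≤ c * d x ^ α ∧ ‖fderiv ℝ (u p) x‖ ≤ c * d x ^ (α - 1))
    (hnorm : ∀ p ∈ I, (∫ x in Ω, |u p x| ^ p / d x ^ p) = 1)
    (hint : ∀ β : ℝ, β < 1 → IntegrableOn (fun x => d x ^ (-β)) Ω)
    (p₀ : ℝ) (hp₀ : p₀ ∈ I) (hα₀ : p₀ * (1 - α) < 1)
    (pn : ℕ → ℝ) (hpn : ∀ n, pn n ∈ I) (hpnlim : Tendsto pn atTop (𝓝 p₀))
    (u₀ : EuclideanSpace ℝ (Fin n) → ℝ)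
    (hae : ∀ᵐ x ∂(volume.restrict Ω), Tendsto (fun n => u (pn n) x) atTop (𝓝 (u₀ x))) :
    (∫ x in Ω, |u₀ x| ^ p₀ / d x ^ p₀) = 1 := by
  have hp01 : 1 < p₀ := hI1 hp₀
  obtain ⟨hα0, hα1⟩ := hα
  by_cases hfr : (frontier Ω).Nonempty
  swap
  · -- frontier empty: d ≡ 0 and hnorm gives 0 = 1
    have hfr' : frontier Ω = ∅ := not_nonempty_iff_eq_empty.1 hfr
    have h0 : ∀ x, d x = 0 := fun x => by rw [hd, hfr', Metric.infDist_empty]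
    have h1 := hnorm p₀ hp₀
    simp only [h0, Real.zero_rpow (by positivity : p₀ ≠ 0), div_zero, integral_zero] at h1
    exact absurd h1 zero_ne_one
  -- main case
  have hdpos : ∀ x ∈ Ω, 0 < d x := by
    intro x hx
    rw [hd]
    refine (isClosed_frontier.notMem_iff_infDist_pos hfr).1 ?_
    intro hmem
    exact (hΩ.frontier_eq ▸ hmem).2 hx
  -- choose β and δ
  set β : ℝ := (p₀ * (1 - α) + 1) / 2 with hβdef
  have hβ1 : β < 1 := by rw [hβdef]; linarith
  have hβgt : p₀ * (1 - α) < β := by rw [hβdef]; linarith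
  set δ : ℝ := min 1 ((β - p₀ * (1 - α)) / (1 - α)) with hδdef
  have hδpos : 0 < δ := lt_min one_pos (div_pos (by linarith) (by linarith))
  have hδ1 : δ ≤ 1 := min_le_left _ _
  have hδβ : δ * (1 - α) ≤ β - p₀ * (1 - α) :=
    (le_div_iff₀ (by linarith : (0:ℝ) < 1 - α)).1 (min_le_right _ _)
  have hev : ∀ᶠ k in atTop, pn k ∈ Set.Ioo (p₀ - 1) (p₀ + δ) :=
    hpnlim (Ioo_mem_nhds (by linarith) (by linarith))
  obtain ⟨N, hN⟩ := eventually_atTop.1 hev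
  set C : ℝ := max c 1 ^ (p₀ + 1) with hCdef
  set bound : EuclideanSpace ℝ (Fin n) → ℝ := fun x => C * (d x ^ (-β) + 1) with hbnddef
  set F : ℕ → EuclideanSpace ℝ (Fin n) → ℝ :=
    fun k x => |u (pn (k + N)) x| ^ (pn (k + N)) / d x ^ (pn (k + N)) with hFdef
  have hqmem : ∀ k : ℕ, pn (k + N) ∈ Set.Ioo (p₀ - 1) (p₀ + δ) :=
    fun k => hN (k + N) (Nat.le_add_left N k)
  have hq1 : ∀ k : ℕ, 1 < pn (k + N) := fun k => hI1 (hpn (k + N))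
  -- measurability
  have hmeas : ∀ k, AEStronglyMeasurable (F k) (volume.restrict Ω) := by
    intro k
    by_contra hcon
    have hni : ¬ Integrable (F k) (volume.restrict Ω) := fun h => hcon h.aestronglyMeasurable
    have h1 := hnorm (pn (k + N)) (hpn (k + N))
    rw [show (∫ x in Ω, |u (pn (k + N)) x| ^ (pn (k + N)) / d x ^ (pn (k + N)))
        = ∫ x in Ω, F k x from rfl, integral_undef hni] at h1
    exact absurd h1 zero_ne_one
  -- bound integrable
  have hbi : Integrable bound (volume.restrict Ω) :=
    ((hint β hβ1).add (integrableOn_const hb.measure_lt_top.ne)).const_mul C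
  -- domination
  have hdom : ∀ k, ∀ᵐ x ∂(volume.restrict Ω), ‖F k x‖ ≤ bound x := by
    intro k
    filter_upwards [hbound (pn (k + N)) (hpn (k + N)), ae_restrict_mem hΩ.measurableSet]
      with x hx hxΩ
    obtain ⟨hu0, hu1, -⟩ := hx
    have hdx : 0 < d x := hdpos x hxΩ
    set p : ℝ := pn (k + N) with hpdef
    have hp1 : 1 < p := hq1 k
    have hppos : 0 < p := by linarith
    have hplt : p < p₀ + δ := (hqmem k).2
    have hple : p ≤ p₀ + 1 := by linarith
    have hFnn : 0 ≤ F k x :=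
      div_nonneg (Real.rpow_nonneg (abs_nonneg _) _) (Real.rpow_nonneg hdx.le _)
    rw [Real.norm_eq_abs, abs_of_nonneg hFnn]
    have h2 : |u p x| ^ p ≤ (c * d x ^ α) ^ p := by
      apply Real.rpow_le_rpow (abs_nonneg _) _ hppos.le
      rw [abs_of_nonneg hu0]; exact hu1
    have h3 : (c * d x ^ α) ^ p = c ^ p * d x ^ (α * p) := by
      rw [Real.mul_rpow hc.le (Real.rpow_nonneg hdx.le _), ← Real.rpow_mul hdx.le]
    have h4 : F k x ≤ c ^ p * d x ^ ((α - 1) * p) := by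
      have hdp : 0 < d x ^ p := Real.rpow_pos_of_pos hdx p
      have h5 : F k x ≤ (c ^ p * d x ^ (α * p)) / d x ^ p := by
        rw [← h3]
        exact (div_le_div_iff_of_pos_right hdp).2 h2
      calc F k x ≤ (c ^ p * d x ^ (α * p)) / d x ^ p := h5
        _ = c ^ p * (d x ^ (α * p) / d x ^ p) := by ring
        _ = c ^ p * d x ^ ((α - 1) * p) := by
            rw [← Real.rpow_sub hdx]; ring_nf
    have hcC : c ^ p ≤ C := by
      calc c ^ p ≤ max c 1 ^ p :=
            Real.rpow_le_rpow hc.le (le_max_left c 1) hppos.le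
        _ ≤ C := Real.rpow_le_rpow_of_exponent_le (le_max_right c 1) hple
    have hdle : d x ^ ((α - 1) * p) ≤ d x ^ (-β) + 1 := by
      rcases le_or_gt (d x) 1 with hdle1 | hdgt1
      · have hexp : -β ≤ (α - 1) * p := by nlinarith
        have := Real.rpow_le_rpow_of_exponent_ge hdx hdle1 hexp
        linarith
      · have : d x ^ ((α - 1) * p) ≤ 1 :=
          Real.rpow_le_one_of_one_le_of_nonpos hdgt1.le (by nlinarith)
        have h6 : 0 ≤ d x ^ (-β) := Real.rpow_nonneg hdx.le _
        linarith
    calc F k x ≤ c ^ p * d x ^ ((α - 1) * p) := h4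
      _ ≤ C * (d x ^ (-β) + 1) :=
          mul_le_mul hcC hdle (Real.rpow_nonneg hdx.le _)
            (Real.rpow_nonneg (le_trans hc.le (le_max_left c 1)) _)
  -- pointwise a.e. convergence
  have hlim : ∀ᵐ x ∂(volume.restrict Ω),
      Tendsto (fun k => F k x) atTop (𝓝 (|u₀ x| ^ p₀ / d x ^ p₀)) := by
    filter_upwards [hae, ae_restrict_mem hΩ.measurableSet] with x hx hxΩ
    have hdx : 0 < d x := hdpos x hxΩ
    have hq : Tendsto (fun k => pn (k + N)) atTop (𝓝 p₀) :=
      hpnlim.comp (tendsto_add_atTop_nat N)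
    have hu : Tendsto (fun k => |u (pn (k + N)) x|) atTop (𝓝 |u₀ x|) :=
      (hx.comp (tendsto_add_atTop_nat N)).abs
    have hnum : Tendsto (fun k => |u (pn (k + N)) x| ^ pn (k + N)) atTop (𝓝 (|u₀ x| ^ p₀)) := by
      have hco : ContinuousAt (fun q : ℝ × ℝ => q.1 ^ q.2) (|u₀ x|, p₀) :=
        Real.continuousAt_rpow _ (Or.inr (by linarith))
      exact hco.tendsto.comp (hu.prodMk_nhds hq)
    have hden : Tendsto (fun k => d x ^ pn (k + N)) atTop (𝓝 (d x ^ p₀)) := by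
      have hco : ContinuousAt (fun q : ℝ × ℝ => q.1 ^ q.2) (d x, p₀) :=
        Real.continuousAt_rpow _ (Or.inl hdx.ne')
      exact hco.tendsto.comp (tendsto_const_nhds.prodMk_nhds hq)
    exact hnum.div hden (Real.rpow_pos_of_pos hdx p₀).ne'
  have key : Tendsto (fun k => ∫ x in Ω, F k x) atTop
      (𝓝 (∫ x in Ω, |u₀ x| ^ p₀ / d x ^ p₀)) :=
    tendsto_integral_of_dominated_convergence bound hmeas hbi hdom hlim
  have const1 : ∀ k : ℕ, (∫ x in Ω, F k x) = 1 := fun k => hnorm (pn (k + N)) (hpn (k + N))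
  have key2 : Tendsto (fun _ : ℕ => (1 : ℝ)) atTop
      (𝓝 (∫ x in Ω, |u₀ x| ^ p₀ / d x ^ p₀)) := by
    rwa [tendsto_congr const1] at key
  exact (tendsto_nhds_unique key2 tendsto_const_nhds)
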